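/- Let V be a real symmetric d×d matrix and W a complex Hermitian d×d matrix (with real part Re W and imaginary part Im W). If V ≥ W in the Loewner (positive semidefinite) order, then tr V ≥ tr(Re W) + tr |Im W|, where |Im W| denotes the absolute value (positive square root of (Im W)² ) of the Hermitian matrix i·Im W (equivalently, the sum of absolute values of the eigenvalues of the real antisymmetric matrix Im W interpreted as an imaginary Hermitian matrix). -/

import Mathlib

open ComplexOrder Matrix

lemma aux_diag_nonneg {d : ℕ} {X : Matrix (Fin d) (Fin d) ℂ} (hX : X.PosSemidef) (i : Fin d) :
    0 ≤ X i i := by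
  exact hX.diag_nonneg

lemma aux_key {d : ℕ} (P M : Matrix (Fin d) (Fin d) ℂ) (hM : M.IsHermitian)
    (h1 : (P - M).PosSemidef) (h2 : (P + M).PosSemidef) :
    ∑ i, |hM.eigenvalues i| ≤ (P.trace).re := by
  classical
  set U : Matrix (Fin d) (Fin d) ℂ := (hM.eigenvectorUnitary : Matrix (Fin d) (Fin d) ℂ) with hU
  set C : Matrix (Fin d) (Fin d) ℂ := Uᴴ * P * U with hC
  have hD : star U * M * U = Matrix.diagonal (RCLike.ofReal ∘ hM.eigenvalues) :=
    by have := hM.conjStarAlgAut_star_eigenvectorUnitary; rw [Unitary.conjStarAlgAut_star_apply] at this; exact this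
  rw [Matrix.star_eq_conjTranspose] at hD
  have h1' : (C - Matrix.diagonal (RCLike.ofReal ∘ hM.eigenvalues)).PosSemidef := by
    have := h1.conjTranspose_mul_mul_same U
    rwa [Matrix.mul_sub, Matrix.sub_mul, hD] at this
  have h2' : (C + Matrix.diagonal (RCLike.ofReal ∘ hM.eigenvalues)).PosSemidef := by
    have := h2.conjTranspose_mul_mul_same U
    rwa [Matrix.mul_add, Matrix.add_mul, hD] at this
  have key : ∀ i, |hM.eigenvalues i| ≤ (C i i).re := by
    intro i
    have e1 := aux_diag_nonneg h1' i
    have e2 := aux_diag_nonneg h2' i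
    rw [Complex.le_def] at e1 e2
    simp [Matrix.sub_apply, Matrix.add_apply, Matrix.diagonal_apply_eq] at e1 e2
    rw [abs_le]
    constructor
    · linarith [e2.1]
    · linarith [e1.1]
  have hUU : U * Uᴴ = 1 := by
    rw [← Matrix.star_eq_conjTranspose]
    exact (Matrix.mem_unitaryGroup_iff).mp hM.eigenvectorUnitary.2
  have htr : C.trace = P.trace := by
    rw [hC, Matrix.trace_mul_cycle, hUU, Matrix.one_mul]
  calc ∑ i, |hM.eigenvalues i| ≤ ∑ i, (C i i).re := Finset.sum_le_sum fun i _ => key i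
    _ = (C.trace).re := by rw [Matrix.trace]; simp [Matrix.diag_apply]
    _ = (P.trace).re := by rw [htr]

/-- If a real symmetric matrix `V` dominates a complex Hermitian matrix `W` in the
Loewner order, then `tr V ≥ tr (Re W) + tr |Im W|`, where `tr |Im W|` is the sum of
the absolute values of the eigenvalues of the Hermitian matrix `i · Im W`. -/
theorem stmt_0 {d : ℕ} (V : Matrix (Fin d) (Fin d) ℝ) (hV : V.IsSymm)
    (W : Matrix (Fin d) (Fin d) ℂ) (hW : W.IsHermitian)
    (hIm : (Complex.I • (Matrix.of fun i j => (((W i j).im : ℝ) : ℂ))).IsHermitian)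
    (hle : (V.map (fun x => (x : ℂ)) - W).PosSemidef) :
    (∑ i, (W i i).re) + (∑ i, |hIm.eigenvalues i|) ≤ V.trace := by
  classical
  set P : Matrix (Fin d) (Fin d) ℂ :=
    Matrix.of fun i j => ((V i j : ℂ) - ((W i j).re : ℂ)) with hPdef
  have hPM1 : (P - Complex.I • (Matrix.of fun i j => (((W i j).im : ℝ) : ℂ))).PosSemidef := by
    have heq : V.map (fun x => (x : ℂ)) - W
        = P - Complex.I • (Matrix.of fun i j => (((W i j).im : ℝ) : ℂ)) := by
      ext i j
      have h := Complex.re_add_im (W i j)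
      simp only [Matrix.sub_apply, Matrix.map_apply, hPdef, Matrix.of_apply, Matrix.smul_apply,
        smul_eq_mul]
      linear_combination h
    rwa [heq] at hle
  have hPM2 : (P + Complex.I • (Matrix.of fun i j => (((W i j).im : ℝ) : ℂ))).PosSemidef := by
    have h := hle.transpose
    have heq : (V.map (fun x => (x : ℂ)) - W)ᵀ
        = P + Complex.I • (Matrix.of fun i j => (((W i j).im : ℝ) : ℂ)) := by
      ext i j
      have hWji : W j i = star (W i j) := (hW.apply j i).symm
      simp only [Matrix.transpose_apply, Matrix.sub_apply, Matrix.map_apply, hPdef,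
        Matrix.of_apply, Matrix.add_apply, Matrix.smul_apply, smul_eq_mul, hV.apply i j, hWji]
      simp [Complex.ext_iff]
    rwa [heq] at h
  have hmain := aux_key P _ hIm hPM1 hPM2
  have htrP : (P.trace).re = V.trace - ∑ i, (W i i).re := by
    rw [Matrix.trace, Matrix.trace]
    simp [hPdef, Finset.sum_sub_distrib, Complex.re_sum]
  rw [htrP] at hmain
  linarith
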